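/- arXiv:2504.01160 — 3 statements merged into one kernel-verified Lean document; each statement's English description precedes it below -/
import Mathlib

section
/- If f: ℝⁿ → ℝ is 1-strongly convex, the partial derivative of the dual function Ψ(y) = f*(Aᵀy) - bᵀy along the i-th coordinate is Lipschitz with constant ‖a_i‖₂²: |∇_iΨ(y + h·e_i) - ∇_iΨ(y)| ≤ ‖a_i‖₂²·|h| for all y ∈ ℝᵐ, h ∈ ℝ. -/
/-- The Fenchel conjugate `f*(x*) = sup_y ⟨x*, y⟩ - f(y)`. -/
noncomputable def fenchel {n : ℕ} (f : EuclideanSpace ℝ (Fin n) → ℝ)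
    (xs : EuclideanSpace ℝ (Fin n)) : ℝ := ⨆ y, inner ℝ xs y - f y

section FenchelAux

open InnerProductSpace Set

set_option maxHeartbeats 1000000


variable {n : ℕ}

/-- Strongly convex `f` is continuous. -/
lemma scvx_continuous (f : EuclideanSpace ℝ (Fin n) → ℝ)
    (hf : StrongConvexOn Set.univ 1 f) : Continuous f := by
  have hcv : ConvexOn ℝ Set.univ f := hf.convexOn (fun r => by positivity)
  have h2 := (hcv.locallyLipschitzOn isOpen_univ).continuousOn
  rw [← continuousOn_univ]
  exact h2

/-- The sup defining the Fenchel conjugate of a strongly convex function is attained. -/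
lemma fenchel_exists_max (f : EuclideanSpace ℝ (Fin n) → ℝ)
    (hf : StrongConvexOn Set.univ 1 f) (x : EuclideanSpace ℝ (Fin n)) :
    ∃ p : EuclideanSpace ℝ (Fin n), ∀ z, inner ℝ x z - f z ≤ (inner ℝ x p : ℝ) - f p := by
  have hfc := scvx_continuous f hf
  obtain ⟨w, hw, hwmin⟩ := (isCompact_closedBall (0 : EuclideanSpace ℝ (Fin n)) 1).exists_isMinOn
    ⟨0, by simp⟩ hfc.continuousOn
  set C : ℝ := |f w| with hC
  have hC0 : 0 ≤ C := abs_nonneg _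
  have hlow : ∀ d : EuclideanSpace ℝ (Fin n), ‖d‖ ≤ 1 → -C ≤ f d := by
    intro d hd
    have h1 : f w ≤ f d := hwmin (by simpa [Metric.mem_closedBall, dist_eq_norm] using hd)
    have h2 := neg_abs_le (f w)
    linarith
  have hout : ∀ z : EuclideanSpace ℝ (Fin n), 2*(‖x‖ + C + |f 0|) + 4 ≤ ‖z‖ →
      (inner ℝ x z : ℝ) - f z ≤ (inner ℝ x (0:EuclideanSpace ℝ (Fin n)) : ℝ) - f 0 := by
    intro z hz
    have ht1 : (1:ℝ) ≤ ‖z‖ := by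
      nlinarith [norm_nonneg x, abs_nonneg (f 0), hC0]
    set t : ℝ := ‖z‖ with ht
    have ht0 : 0 < t := lt_of_lt_of_le one_pos ht1
    have hti : (0:ℝ) ≤ t⁻¹ := by positivity
    have hti1 : t⁻¹ ≤ 1 := by
      rw [inv_le_one_iff₀]; right; exact ht1
    have hsum : t⁻¹ + (1 - t⁻¹) = 1 := by ring
    have hcvx := hf.2 (mem_univ z) (mem_univ (0 : EuclideanSpace ℝ (Fin n))) hti
      (by linarith) hsum
    have hd : ‖t⁻¹ • z‖ ≤ 1 := by
      rw [norm_smul, Real.norm_eq_abs, abs_of_nonneg hti, ← ht,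
        inv_mul_cancel₀ (ne_of_gt ht0)]
    have hfd := hlow _ hd
    simp only [smul_zero, add_zero, sub_zero, smul_eq_mul, ← ht] at hcvx
    -- hcvx : f (t⁻¹ • z) ≤ t⁻¹ * f z + (1 - t⁻¹) * f 0 - t⁻¹ * (1 - t⁻¹) * (1/2 * t^2)
    have hmul := mul_le_mul_of_nonneg_left hcvx ht0.le
    have hexp : t * (t⁻¹ * f z + (1 - t⁻¹) * f 0 - t⁻¹ * (1 - t⁻¹) * (1/2 * t^2))
        = f z + (t - 1) * f 0 - (t^2 - t)/2 := by
      field_simp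
    rw [hexp] at hmul
    have hmul2 := mul_le_mul_of_nonneg_left hfd ht0.le
    -- t * (-C) ≤ t * f (t⁻¹ • z)
    have hxz : (inner ℝ x z : ℝ) ≤ ‖x‖ * t := real_inner_le_norm x z
    have hx0 : (inner ℝ x (0:EuclideanSpace ℝ (Fin n)) : ℝ) = 0 := inner_zero_right x
    rw [hx0]
    have habs1 := le_abs_self (f 0)
    have habs2 := neg_abs_le (f 0)
    -- f z ≥ -C*t - (t-1) f 0 + (t^2-t)/2
    nlinarith [hz, ht1, hC0, norm_nonneg x, abs_nonneg (f 0), hmul, hmul2,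
      mul_nonneg (sub_nonneg.mpr ht1) (abs_nonneg (f 0)),
      mul_nonneg ht0.le hC0,
      mul_nonneg ht0.le (norm_nonneg x),
      mul_nonneg (mul_nonneg ht0.le (sub_nonneg.mpr ht1)) (abs_nonneg (f 0)),
      mul_nonneg ht0.le (sub_nonneg.mpr hz)]
  set R : ℝ := 2*(‖x‖ + C + |f 0|) + 4 with hR
  have hR0 : 0 ≤ R := by positivity
  have hcont : Continuous fun z : EuclideanSpace ℝ (Fin n) => (inner ℝ x z : ℝ) - f z :=
    ((innerSL ℝ x).continuous).sub hfc
  obtain ⟨p, hpmem, hpmax⟩ := (isCompact_closedBall (0 : EuclideanSpace ℝ (Fin n)) R).exists_isMaxOn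
    ⟨0, by simpa using hR0⟩ hcont.continuousOn
  refine ⟨p, fun z => ?_⟩
  by_cases hzb : ‖z‖ ≤ R
  · exact hpmax (by simpa [Metric.mem_closedBall, dist_eq_norm] using hzb)
  · push_neg at hzb
    have h0mem : (0 : EuclideanSpace ℝ (Fin n)) ∈
        Metric.closedBall (0:EuclideanSpace ℝ (Fin n)) R := by simpa using hR0
    exact le_trans (hout z hzb.le) (hpmax h0mem)


/-- `fenchel f` dominates every affine minorant value. -/
lemma le_fenchel (f : EuclideanSpace ℝ (Fin n) → ℝ)
    (hf : StrongConvexOn Set.univ 1 f) (x z : EuclideanSpace ℝ (Fin n)) :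
    (inner ℝ x z : ℝ) - f z ≤ fenchel f x := by
  obtain ⟨p', hp'⟩ := fenchel_exists_max f hf x
  exact le_ciSup ⟨(inner ℝ x p' : ℝ) - f p', by rintro _ ⟨z', rfl⟩; exact hp' z'⟩ z

/-- The gradient of `fenchel f` at `x` is the maximizer. -/
lemma grad_eq_max (f : EuclideanSpace ℝ (Fin n) → ℝ)
    (hf : StrongConvexOn Set.univ 1 f) (x gx p : EuclideanSpace ℝ (Fin n))
    (hgx : HasGradientAt (fenchel f) gx x)
    (hp : ∀ z, inner ℝ x z - f z ≤ (inner ℝ x p : ℝ) - f p) : gx = p := by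
  have hpsix : fenchel f x = (inner ℝ x p : ℝ) - f p :=
    le_antisymm (ciSup_le fun z => hp z) (le_fenchel f hf x p)
  set F : EuclideanSpace ℝ (Fin n) → ℝ := fun x' => fenchel f x' - (inner ℝ x' p : ℝ) with hF
  have hmin : IsLocalMin F x := by
    apply Filter.Eventually.of_forall
    intro x'
    have h1 := le_fenchel f hf x' p
    simp only [hF, hpsix]
    linarith
  have hd1 : HasFDerivAt (fenchel f) (toDual ℝ (EuclideanSpace ℝ (Fin n)) gx) x :=
    hgx.hasFDerivAt
  have hd2 : HasFDerivAt (fun x' : EuclideanSpace ℝ (Fin n) => (inner ℝ x' p : ℝ))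
      (toDual ℝ (EuclideanSpace ℝ (Fin n)) p) x := by
    have heq : (fun x' : EuclideanSpace ℝ (Fin n) => (inner ℝ x' p : ℝ))
        = fun x' => toDual ℝ (EuclideanSpace ℝ (Fin n)) p x' := by
      funext x'
      simp only [InnerProductSpace.toDual_apply_apply]
      exact real_inner_comm _ _
    rw [heq]
    exact (toDual ℝ (EuclideanSpace ℝ (Fin n)) p).hasFDerivAt
  have hdF : HasFDerivAt F
      (toDual ℝ (EuclideanSpace ℝ (Fin n)) gx - toDual ℝ (EuclideanSpace ℝ (Fin n)) p) x :=
    hd1.sub hd2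
  have hzero := hmin.hasFDerivAt_eq_zero hdF
  have : toDual ℝ (EuclideanSpace ℝ (Fin n)) gx = toDual ℝ (EuclideanSpace ℝ (Fin n)) p := by
    rwa [sub_eq_zero] at hzero
  exact (toDual ℝ (EuclideanSpace ℝ (Fin n))).injective this

/-- Strong subgradient inequality at the maximizer. -/
lemma strong_subgrad (f : EuclideanSpace ℝ (Fin n) → ℝ)
    (hf : StrongConvexOn Set.univ 1 f) (x p : EuclideanSpace ℝ (Fin n))
    (hp : ∀ z, inner ℝ x z - f z ≤ (inner ℝ x p : ℝ) - f p)
    (z : EuclideanSpace ℝ (Fin n)) :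
    (inner ℝ x (z - p) : ℝ) + 1/2 * ‖z - p‖^2 ≤ f z - f p := by
  set D : ℝ := ‖z - p‖^2 with hD
  have hD0 : 0 ≤ D := sq_nonneg _
  have key : ∀ t : ℝ, 0 < t → t < 1 →
      (inner ℝ x (z - p) : ℝ) + 1/2 * D - (f z - f p) ≤ t * D / 2 := by
    intro t ht0 ht1
    have hcvx := hf.2 (mem_univ z) (mem_univ p) ht0.le (by linarith)
      (show t + (1 - t) = 1 by ring)
    simp only [smul_eq_mul] at hcvx
    have hmax := hp (t • z + (1 - t) • p)
    have hin : (inner ℝ x (t • z + (1 - t) • p) : ℝ)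
        = t * inner ℝ x z + (1 - t) * inner ℝ x p := by
      rw [inner_add_right, real_inner_smul_right, real_inner_smul_right]
    have hinzp : (inner ℝ x (z - p) : ℝ) = inner ℝ x z - inner ℝ x p := inner_sub_right x z p
    rw [hin] at hmax
    rw [← hD] at hcvx
    rw [hinzp]
    rw [← mul_le_mul_iff_of_pos_left ht0]
    ring_nf
    ring_nf at hmax hcvx
    nlinarith [hmax, hcvx]
  by_contra hcon
  push_neg at hcon
  set L : ℝ := (inner ℝ x (z - p) : ℝ) + 1/2 * D - (f z - f p) with hL
  have hL0 : 0 < L := by simp only [hL]; linarith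
  set t : ℝ := min (1/2) (L / (D + 1)) with htdef
  have ht0 : 0 < t := lt_min (by norm_num) (div_pos hL0 (by linarith))
  have ht1 : t < 1 := lt_of_le_of_lt (min_le_left _ _) (by norm_num)
  have hk := key t ht0 ht1
  have h4 : t ≤ L / (D + 1) := min_le_right _ _
  have h5 : t * (D + 1) ≤ L := by
    rw [← div_mul_cancel₀ L (show D + 1 ≠ 0 by positivity)]
    exact mul_le_mul_of_nonneg_right h4 (by linarith)
  clear_value t D L
  nlinarith [mul_nonneg ht0.le hD0, ht0, hk, h5]

/-- The gradient map of the conjugate is 1-Lipschitz. -/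
lemma grad_fenchel_lipschitz (f : EuclideanSpace ℝ (Fin n) → ℝ)
    (hf : StrongConvexOn Set.univ 1 f)
    (g : EuclideanSpace ℝ (Fin n) → EuclideanSpace ℝ (Fin n))
    (hg : ∀ xs, HasGradientAt (fenchel f) (g xs) xs)
    (u v : EuclideanSpace ℝ (Fin n)) : ‖g u - g v‖ ≤ ‖u - v‖ := by
  obtain ⟨pu, hpu⟩ := fenchel_exists_max f hf u
  obtain ⟨pv, hpv⟩ := fenchel_exists_max f hf v
  have hu : g u = pu := grad_eq_max f hf u (g u) pu (hg u) hpu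
  have hv : g v = pv := grad_eq_max f hf v (g v) pv (hg v) hpv
  have h1 := strong_subgrad f hf u pu hpu pv
  have h2 := strong_subgrad f hf v pv hpv pu
  have e1 : (inner ℝ u (pv - pu) : ℝ) = -(inner ℝ u (pu - pv) : ℝ) := by
    rw [← inner_neg_right, neg_sub]
  have e2 : (inner ℝ (u - v) (pu - pv) : ℝ)
      = (inner ℝ u (pu - pv) : ℝ) - (inner ℝ v (pu - pv) : ℝ) := inner_sub_left u v (pu - pv)
  have e3 : ‖pv - pu‖ = ‖pu - pv‖ := norm_sub_rev _ _
  have hmono : ‖pu - pv‖^2 ≤ (inner ℝ (u - v) (pu - pv) : ℝ) := by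
    rw [e2]
    rw [e1, e3] at h1
    linarith
  have hcs : (inner ℝ (u - v) (pu - pv) : ℝ) ≤ ‖u - v‖ * ‖pu - pv‖ := real_inner_le_norm _ _
  rw [hu, hv]
  rcases eq_or_lt_of_le (norm_nonneg (pu - pv)) with hz | hz
  · rw [← hz]; exact norm_nonneg _
  · nlinarith [hmono, hcs, hz]


end FenchelAux

section Main

open InnerProductSpace Set

set_option maxHeartbeats 1000000

/-- If `f` is 1-strongly convex, the `i`-th partial derivative of the dual
function `Ψ(y) = f*(Aᵀy) - bᵀy`, namely `∇_iΨ(y) = ⟨a_i, ∇f*(Aᵀy)⟩ - b_i`,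
is Lipschitz with constant `‖a_i‖₂²`. -/
theorem dual_partial_derivative_coordinatewise_lipschitz {m n : ℕ}
    (A : Matrix (Fin m) (Fin n) ℝ) (b : Fin m → ℝ)
    (f : EuclideanSpace ℝ (Fin n) → ℝ)
    (hf : StrongConvexOn Set.univ 1 f)
    (g : EuclideanSpace ℝ (Fin n) → EuclideanSpace ℝ (Fin n))
    (hg : ∀ xs, HasGradientAt (fenchel f) (g xs) xs)
    (Gi : Fin m → (Fin m → ℝ) → ℝ)
    (hGi : ∀ i y, Gi i y = (∑ j, A i j * g (WithLp.toLp 2 (A.transpose.mulVec y) : EuclideanSpace ℝ (Fin n)) j) - b i)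
    (i : Fin m) (y : Fin m → ℝ) (h : ℝ) :
    |Gi i (y + h • (Pi.single i 1 : Fin m → ℝ)) - Gi i y| ≤ (∑ j, (A i j) ^ 2) * |h| := by
  set u : EuclideanSpace ℝ (Fin n) := (WithLp.toLp 2 (A.transpose.mulVec y) : EuclideanSpace ℝ (Fin n)) with hu
  set v : EuclideanSpace ℝ (Fin n) :=
    (WithLp.toLp 2 (A.transpose.mulVec (y + h • (Pi.single i 1 : Fin m → ℝ))) : EuclideanSpace ℝ (Fin n)) with hv
  set ai : EuclideanSpace ℝ (Fin n) := WithLp.toLp 2 (fun j => A i j : Fin n → ℝ) with hai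
  have hvu : v = u + h • ai := by
    ext j
    show (A.transpose.mulVec (y + h • (Pi.single i 1 : Fin m → ℝ))) j
      = (A.transpose.mulVec y) j + h * A i j
    simp [Matrix.mulVec, dotProduct, Matrix.transpose_apply, mul_add,
      Finset.sum_add_distrib, Pi.single_apply, mul_ite, mul_comm]
  have hlip := grad_fenchel_lipschitz f hf g hg v u
  have hvun : ‖v - u‖ = |h| * ‖ai‖ := by
    rw [hvu]
    simp only [add_sub_cancel_left]
    rw [norm_smul, Real.norm_eq_abs]
  have hinner : (inner ℝ ai (g v - g u) : ℝ) = ∑ j, A i j * (g v j - g u j) := by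
    rw [PiLp.inner_apply]
    refine Finset.sum_congr rfl fun j _ => ?_
    simp [hai, mul_comm]
  have hcs : |(inner ℝ ai (g v - g u) : ℝ)| ≤ ‖ai‖ * ‖g v - g u‖ := abs_real_inner_le_norm _ _
  have hnai : ‖ai‖^2 = ∑ j, (A i j)^2 := by
    rw [EuclideanSpace.norm_eq]
    rw [Real.sq_sqrt (by positivity)]
    refine Finset.sum_congr rfl fun j _ => ?_
    simp [hai, Real.norm_eq_abs, sq_abs]
  have hdiff : Gi i (y + h • (Pi.single i 1 : Fin m → ℝ)) - Gi i y
      = ∑ j, A i j * (g v j - g u j) := by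
    rw [hGi, hGi]
    simp only [← hu, ← hv]
    have e : ∑ j, A i j * (g v j - g u j) = ∑ j, A i j * g v j - ∑ j, A i j * g u j := by
      rw [← Finset.sum_sub_distrib]
      exact Finset.sum_congr rfl fun j _ => by ring
    rw [e]
    ring
  rw [hdiff, ← hinner]
  calc |(inner ℝ ai (g v - g u) : ℝ)| ≤ ‖ai‖ * ‖g v - g u‖ := hcs
    _ ≤ ‖ai‖ * ‖v - u‖ := by
        have := norm_nonneg ai
        exact mul_le_mul_of_nonneg_left hlip this
    _ = ‖ai‖ * (|h| * ‖ai‖) := by rw [hvun]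
    _ = ‖ai‖^2 * |h| := by ring
    _ = (∑ j, (A i j)^2) * |h| := by rw [hnai]

end Main
end

section
/- The sequence defined by θ₀ ∈ (0, 1] and θ_{k+1} = (√(θ_k⁴ + 4θ_k²) - θ_k²)/2 satisfies the bounds (2 - θ₀)/(k + (2 - θ₀)/θ₀) ≤ θ_k ≤ 2/(k + 2/θ₀) for all k ≥ 0. -/
lemma theta_quad (a b : ℝ) (ha : 0 < a)
    (hb : b = (Real.sqrt (a ^ 4 + 4 * a ^ 2) - a ^ 2) / 2) :
    0 < b ∧ b ^ 2 = (1 - b) * a ^ 2 := by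
  have hnn : (0:ℝ) ≤ a ^ 4 + 4 * a ^ 2 := by positivity
  have hs : Real.sqrt (a ^ 4 + 4 * a ^ 2) ^ 2 = a ^ 4 + 4 * a ^ 2 := Real.sq_sqrt hnn
  have hsnn : 0 ≤ Real.sqrt (a ^ 4 + 4 * a ^ 2) := Real.sqrt_nonneg _
  have hgt : a ^ 2 < Real.sqrt (a ^ 4 + 4 * a ^ 2) := by
    nlinarith [sq_nonneg (Real.sqrt (a ^ 4 + 4 * a ^ 2) - a ^ 2)]
  constructor
  · rw [hb]; linarith
  · rw [hb]; nlinarith [hs]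

/-- The sequence `θ₀ ∈ (0,1]`, `θ_{k+1} = (√(θ_k⁴ + 4θ_k²) - θ_k²)/2` satisfies
`(2 - θ₀)/(k + (2 - θ₀)/θ₀) ≤ θ_k ≤ 2/(k + 2/θ₀)`. -/
theorem theta_bounds (θ : ℕ → ℝ) (h0 : 0 < θ 0) (h1 : θ 0 ≤ 1)
    (hrec : ∀ k, θ (k + 1) = (Real.sqrt ((θ k) ^ 4 + 4 * (θ k) ^ 2) - (θ k) ^ 2) / 2)
    (k : ℕ) :
    (2 - θ 0) / (k + (2 - θ 0) / θ 0) ≤ θ k ∧ θ k ≤ 2 / (k + 2 / θ 0) := by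
  -- positivity of all terms
  have hpos : ∀ n, 0 < θ n := by
    intro n
    induction n with
    | zero => exact h0
    | succ n ih => exact (theta_quad _ _ ih (hrec n)).1
  have hquad : ∀ n, θ (n + 1) ^ 2 = (1 - θ (n + 1)) * θ n ^ 2 := fun n =>
    (theta_quad _ _ (hpos n) (hrec n)).2
  have hlt : ∀ n, θ (n + 1) < θ n := by
    intro n
    have hq := hquad n
    have ha := hpos n
    have hb := hpos (n + 1)
    nlinarith [mul_pos hb ha, mul_pos hb hb, mul_pos ha ha, mul_pos hb (mul_pos ha ha)]
  have hle0 : ∀ n, θ n ≤ θ 0 := by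
    intro n
    induction n with
    | zero => exact le_refl _
    | succ n ih => exact le_trans (le_of_lt (hlt n)) ih
  have hc : (0:ℝ) < 2 - θ 0 := by linarith
  -- bounds on 1/θ n
  have hinv : ∀ n : ℕ, (n : ℝ) / 2 + 1 / θ 0 ≤ 1 / θ n ∧
      1 / θ n ≤ (n : ℝ) / (2 - θ 0) + 1 / θ 0 := by
    intro n
    induction n with
    | zero => simp
    | succ n ih =>
      have ha := hpos n
      have hb := hpos (n + 1)
      have hba := hlt n
      have hq := hquad n
      have hbθ0 : θ (n + 1) ≤ θ 0 := hle0 (n + 1)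
      have hblow : (1 - θ 0) * θ n ≤ θ (n + 1) := by
        nlinarith [sq_nonneg ((1 - θ 0) * θ n - θ (n + 1))]
      have hup : 1 / θ (n + 1) ≤ 1 / θ n + 1 / (2 - θ 0) := by
        rw [div_add_div _ _ (ne_of_gt ha) (ne_of_gt hc), div_le_div_iff₀ hb (by positivity)]
        nlinarith
      have hlow : 1 / θ n + 1 / 2 ≤ 1 / θ (n + 1) := by
        rw [div_add_div _ _ (ne_of_gt ha) (by norm_num : (2:ℝ) ≠ 0),
          div_le_div_iff₀ (by positivity) hb]
        nlinarith
      constructor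
      · push_cast
        have : ((n:ℝ) + 1) / 2 = (n:ℝ) / 2 + 1 / 2 := by ring
        linarith [ih.1]
      · push_cast
        have : ((n:ℝ) + 1) / (2 - θ 0) = (n:ℝ) / (2 - θ 0) + 1 / (2 - θ 0) := by ring
        linarith [ih.2]
  obtain ⟨hl, hr⟩ := hinv k
  have hθk := hpos k
  constructor
  · have hX : (0:ℝ) < (k : ℝ) / (2 - θ 0) + 1 / θ 0 := by positivity
    have h2 : (k : ℝ) + (2 - θ 0) / θ 0 = (2 - θ 0) * ((k : ℝ) / (2 - θ 0) + 1 / θ 0) := by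
      field_simp
    rw [h2, div_mul_eq_div_div, div_self (ne_of_gt hc)]
    calc 1 / ((k : ℝ) / (2 - θ 0) + 1 / θ 0) ≤ 1 / (1 / θ k) := by
          apply one_div_le_one_div_of_le (by positivity) hr
      _ = θ k := one_div_one_div _
  · have hY : (0:ℝ) < (k : ℝ) / 2 + 1 / θ 0 := by positivity
    have h2 : (k : ℝ) + 2 / θ 0 = 2 * ((k : ℝ) / 2 + 1 / θ 0) := by field_simp
    rw [h2, div_mul_eq_div_div, div_self (by norm_num : (2:ℝ) ≠ 0)]
    calc θ k = 1 / (1 / θ k) := (one_div_one_div _).symm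
      _ ≤ 1 / ((k : ℝ) / 2 + 1 / θ 0) := one_div_le_one_div_of_le hY hl
end

section
/- Let f: ℝⁿ → ℝ be strongly convex with b ∈ range(A). Then x̂ is the unique solution of min f(x) subject to Ax = b if and only if there exists ŷ ∈ ℝᵐ with Ax̂ = b and x̂ = ∇f*(Aᵀŷ), where ŷ is a minimizer of the dual function Ψ(y) = f*(Aᵀy) - bᵀy. -/
namespace PDOptAux

open Set InnerProductSpace

variable {m n : ℕ} {α : ℝ} {f : EuclideanSpace ℝ (Fin n) → ℝ}

lemma pd_inner_eq (x y : EuclideanSpace ℝ (Fin n)) : (inner ℝ x y : ℝ) = ∑ i, x i * y i := by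
  simp [PiLp.inner_apply, RCLike.inner_apply, mul_comm]

lemma inner_transpose_mulVec (A : Matrix (Fin m) (Fin n) ℝ) (y : Fin m → ℝ)
    (x : EuclideanSpace ℝ (Fin n)) :
    @inner ℝ (EuclideanSpace ℝ (Fin n)) _ (WithLp.toLp 2 (A.transpose.mulVec y)) x
      = ∑ i, A.mulVec x i * y i := by
  simp only [pd_inner_eq, Matrix.mulVec, dotProduct, Matrix.transpose_apply,
    Finset.sum_mul]
  rw [Finset.sum_comm]
  apply Finset.sum_congr rfl; intro i _
  apply Finset.sum_congr rfl; intro j _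
  ring

/-- `y ↦ Aᵀ y` as a linear map into Euclidean space. -/
def pdT {m n : ℕ} (A : Matrix (Fin m) (Fin n) ℝ) :
    (Fin m → ℝ) →ₗ[ℝ] EuclideanSpace ℝ (Fin n) where
  toFun y := (WithLp.toLp 2 (A.transpose.mulVec y) : EuclideanSpace ℝ (Fin n))
  map_add' x y := by simp [Matrix.mulVec_add]
  map_smul' c x := by simp [Matrix.mulVec_smul]

lemma lower_bound (hα : 0 < α) (hf : StrongConvexOn univ α f) :
    ∃ M : ℝ, ∀ y : EuclideanSpace ℝ (Fin n), α/2 * ‖y‖^2 - M * ‖y‖ - M ≤ f y := by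
  set c : EuclideanSpace ℝ (Fin n) → ℝ := fun x => f x - α/2 * ‖x‖^2 with hc_def
  have hc : ConvexOn ℝ univ c := strongConvexOn_iff_convex.mp hf
  have hcont : Continuous c := by
    rw [← continuousOn_univ]
    exact hc.continuousOn isOpen_univ
  obtain ⟨z0, -, hz0⟩ := (isCompact_closedBall (0 : EuclideanSpace ℝ (Fin n)) 1).exists_isMaxOn
    ⟨0, by simp⟩ hcont.continuousOn
  set K := c z0 with hK
  refine ⟨|K - c 0| + |c 0|, fun y => ?_⟩
  have hyl : c 0 - (K - c 0) * ‖y‖ ≤ c y := by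
    rcases eq_or_ne y 0 with rfl | hy
    · simp
    · have ht : (0:ℝ) < ‖y‖ := norm_pos_iff.mpr hy
      set t := ‖y‖
      have hcomb : (0 : EuclideanSpace ℝ (Fin n))
          = (1/(1+t)) • y + (t/(1+t)) • (-(t⁻¹) • y) := by
        rw [smul_smul, ← add_smul]
        have : 1/(1+t) + t/(1+t) * -t⁻¹ = 0 := by
          field_simp
          ring
        rw [this, zero_smul]
      have hmem : -(t⁻¹) • y ∈ Metric.closedBall (0 : EuclideanSpace ℝ (Fin n)) 1 := by
        have : ‖-(t⁻¹) • y‖ = 1 := by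
          rw [norm_smul]
          rw [norm_neg, Real.norm_eq_abs, abs_of_pos (inv_pos.mpr ht)]
          exact inv_mul_cancel₀ ht.ne'
        simpa [Metric.mem_closedBall, dist_eq_norm] using this.le
      have h1 : c 0 ≤ (1/(1+t)) * c y + (t/(1+t)) * c (-(t⁻¹) • y) := by
        have := hc.2 (mem_univ y) (mem_univ (-(t⁻¹) • y))
          (by positivity : (0:ℝ) ≤ 1/(1+t)) (by positivity : (0:ℝ) ≤ t/(1+t))
          (by field_simp)
        rw [← hcomb] at this
        simpa using this
      have h2 : c (-(t⁻¹) • y) ≤ K := hz0 hmem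
      have h3 : c 0 ≤ (1/(1+t)) * c y + (t/(1+t)) * K := by
        have : (t/(1+t)) * c (-(t⁻¹) • y) ≤ (t/(1+t)) * K := by
          apply mul_le_mul_of_nonneg_left h2 (by positivity)
        linarith
      have h1t : (0:ℝ) < 1 + t := by linarith
      rw [div_mul_eq_mul_div, div_mul_eq_mul_div, ← add_div, le_div_iff₀ h1t] at h3
      nlinarith
  have hfy : f y = c y + α/2 * ‖y‖^2 := by simp [hc_def]
  have h4 : K - c 0 ≤ |K - c 0| := le_abs_self _
  have h5 : -(|c 0|) ≤ c 0 := neg_abs_le _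
  have hny : (0:ℝ) ≤ ‖y‖ := norm_nonneg _
  clear_value K
  clear hc hcont hz0 hK hc_def
  clear_value c
  have key : (K - c 0) * ‖y‖ ≤ |K - c 0| * ‖y‖ := mul_le_mul_of_nonneg_right h4 hny
  have key2 : (0:ℝ) ≤ |c 0| * ‖y‖ := mul_nonneg (abs_nonneg (c 0)) hny
  have key3 : (0:ℝ) ≤ |K - c 0| := abs_nonneg (K - c 0)
  have expand : (|K - c 0| + |c 0|) * ‖y‖ = |K - c 0| * ‖y‖ + |c 0| * ‖y‖ := by ring
  linarith

lemma strong_convexOn (hα : 0 < α) (hf : StrongConvexOn univ α f) : ConvexOn ℝ univ f :=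
  hf.convexOn (by intro r; dsimp; positivity)

lemma strong_continuous (hα : 0 < α) (hf : StrongConvexOn univ α f) : Continuous f :=
  continuousOn_univ.mp ((strong_convexOn hα hf).continuousOn isOpen_univ)

lemma fenchel_max_exists (hα : 0 < α) (hf : StrongConvexOn univ α f)
    (s : EuclideanSpace ℝ (Fin n)) :
    ∃ y0, ∀ y, (inner ℝ s y : ℝ) - f y ≤ (inner ℝ s y0 : ℝ) - f y0 := by
  obtain ⟨M, hM⟩ := lower_bound hα hf
  have hcont : Continuous f := strong_continuous hα hf
  have hobj : Continuous fun y : EuclideanSpace ℝ (Fin n) => (inner ℝ s y : ℝ) - f y :=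
    (continuous_const.inner continuous_id).sub hcont
  obtain ⟨R, hR1, hR2⟩ : ∃ R : ℝ, 1 ≤ R ∧ (2/α) * ((‖s‖ + |M|) + |M| + |f 0|) ≤ R :=
    ⟨max 1 ((2/α) * ((‖s‖ + |M|) + |M| + |f 0|)), le_max_left _ _, le_max_right _ _⟩
  have hout : ∀ y : EuclideanSpace ℝ (Fin n), R < ‖y‖ →
      (inner ℝ s y : ℝ) - f y ≤ (inner ℝ s (0 : EuclideanSpace ℝ (Fin n)) : ℝ) - f 0 := by
    intro y hy
    rw [inner_zero_right]
    have h1 : (inner ℝ s y : ℝ) ≤ ‖s‖ * ‖y‖ := real_inner_le_norm s y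
    have h2 := hM y
    have ht0 : (1:ℝ) ≤ ‖y‖ := hR1.trans hy.le
    have hC : ((‖s‖ + |M|) + |M| + |f 0|) ≤ α/2 * ‖y‖ := by
      have h3 : (α/2) * ((2/α) * ((‖s‖ + |M|) + |M| + |f 0|)) ≤ (α/2) * ‖y‖ :=
        mul_le_mul_of_nonneg_left (hR2.trans hy.le) (by positivity)
      have h4 : (α/2) * ((2/α) * ((‖s‖ + |M|) + |M| + |f 0|))
          = (‖s‖ + |M|) + |M| + |f 0| := by field_simp
      linarith
    have hCt : ((‖s‖ + |M|) + |M| + |f 0|) * ‖y‖ ≤ (α/2 * ‖y‖) * ‖y‖ :=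
      mul_le_mul_of_nonneg_right hC (by linarith)
    nlinarith [le_abs_self M, neg_abs_le M, le_abs_self (f 0), neg_abs_le (f 0),
      norm_nonneg s, norm_nonneg y,
      mul_le_mul_of_nonneg_right (le_abs_self M) (le_trans zero_le_one ht0)]
  obtain ⟨y0, hy0mem, hy0⟩ :=
    (isCompact_closedBall (0 : EuclideanSpace ℝ (Fin n)) R).exists_isMaxOn
      ⟨0, by simpa using le_trans zero_le_one hR1⟩ hobj.continuousOn
  refine ⟨y0, fun y => ?_⟩
  rcases le_or_gt ‖y‖ R with h | h
  · exact hy0 (by simpa [Metric.mem_closedBall, dist_eq_norm] using h)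
  · exact (hout y h).trans (hy0 (by simpa using le_trans zero_le_one hR1))

lemma fenchel_young (hα : 0 < α) (hf : StrongConvexOn univ α f)
    (s y : EuclideanSpace ℝ (Fin n)) : (inner ℝ s y : ℝ) - f y ≤ fenchel f s := by
  obtain ⟨y0, hy0⟩ := fenchel_max_exists hα hf s
  exact le_ciSup ⟨_, fun z hz => by obtain ⟨y, rfl⟩ := hz; exact hy0 y⟩ y

lemma fenchel_attain (hα : 0 < α) (hf : StrongConvexOn univ α f)
    {gs s : EuclideanSpace ℝ (Fin n)} (hgs : HasGradientAt (fenchel f) gs s) :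
    fenchel f s = (inner ℝ s gs : ℝ) - f gs := by
  obtain ⟨y0, hy0⟩ := fenchel_max_exists hα hf s
  have hatt : fenchel f s = (inner ℝ s y0 : ℝ) - f y0 :=
    le_antisymm (ciSup_le fun y => hy0 y) (fenchel_young hα hf s y0)
  have hq : HasFDerivAt (fun t => fenchel f t - (toDual ℝ (EuclideanSpace ℝ (Fin n)) y0) t)
      (toDual ℝ (EuclideanSpace ℝ (Fin n)) gs - toDual ℝ (EuclideanSpace ℝ (Fin n)) y0) s :=
    hgs.hasFDerivAt.sub ((toDual ℝ (EuclideanSpace ℝ (Fin n)) y0).hasFDerivAt)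
  have hmin : ∀ t, fenchel f s - (toDual ℝ (EuclideanSpace ℝ (Fin n)) y0) s
      ≤ fenchel f t - (toDual ℝ (EuclideanSpace ℝ (Fin n)) y0) t := by
    intro t
    have h1 : (inner ℝ t y0 : ℝ) - f y0 ≤ fenchel f t := fenchel_young hα hf t y0
    simp only [toDual_apply_apply, hatt]
    have e1 : (inner ℝ y0 t : ℝ) = inner ℝ t y0 := real_inner_comm _ _
    have e2 : (inner ℝ y0 s : ℝ) = inner ℝ s y0 := real_inner_comm _ _
    rw [e1, e2]
    linarith
  have hloc : IsLocalMin (fun t => fenchel f t - (toDual ℝ (EuclideanSpace ℝ (Fin n)) y0) t) s :=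
    Filter.Eventually.of_forall hmin
  have hzero := hloc.hasFDerivAt_eq_zero hq
  have h2 : (inner ℝ (gs - y0) (gs - y0) : ℝ) = 0 := by
    have h3 := DFunLike.congr_fun hzero (gs - y0)
    simp only [ContinuousLinearMap.sub_apply, toDual_apply_apply,
      ContinuousLinearMap.zero_apply] at h3
    rw [inner_sub_left]
    exact h3
  have : gs = y0 := sub_eq_zero.mp (inner_self_eq_zero.mp h2)
  rw [hatt, this]

lemma fenchel_max_unique (hα : 0 < α) (hf : StrongConvexOn univ α f)
    {gs s x : EuclideanSpace ℝ (Fin n)} (hgs : HasGradientAt (fenchel f) gs s)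
    (hx : (inner ℝ s x : ℝ) - f x = fenchel f s) : x = gs := by
  by_contra hne
  have hatt := fenchel_attain hα hf hgs
  have hsc : StrictConvexOn ℝ univ f := hf.strictConvexOn hα
  have hmid := hsc.2 (mem_univ x) (mem_univ gs) hne (by norm_num : (0:ℝ) < 1/2)
    (by norm_num : (0:ℝ) < 1/2) (by norm_num)
  set z := (1/2:ℝ) • x + (1/2:ℝ) • gs with hz
  have hinner : (inner ℝ s z : ℝ) = (1/2:ℝ) * inner ℝ s x + (1/2:ℝ) * inner ℝ s gs := by
    rw [hz, inner_add_right, real_inner_smul_right, real_inner_smul_right]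
  have hF : (inner ℝ s z : ℝ) - f z ≤ fenchel f s := fenchel_young hα hf s z
  have : (inner ℝ s z : ℝ) - f z > fenchel f s := by
    have : f z < (1/2:ℝ) * f x + (1/2:ℝ) * f gs := by simpa using hmid
    rw [hinner]
    nlinarith [hx, hatt]
  linarith

end PDOptAux

open Set InnerProductSpace PDOptAux in
/-- Primal–dual optimality. -/
theorem primal_dual_optimality {m n : ℕ} (α : ℝ) (hα : 0 < α)
    (A : Matrix (Fin m) (Fin n) ℝ) (b : Fin m → ℝ)
    (hb : b ∈ Set.range A.mulVec)
    (f : EuclideanSpace ℝ (Fin n) → ℝ)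
    (hf : StrongConvexOn Set.univ α f)
    (g : EuclideanSpace ℝ (Fin n) → EuclideanSpace ℝ (Fin n))
    (hg : ∀ xs, HasGradientAt (fenchel f) (g xs) xs)
    (Ψ : (Fin m → ℝ) → ℝ)
    (hΨ : ∀ y, Ψ y = fenchel f (WithLp.toLp 2 (A.transpose.mulVec y) : EuclideanSpace ℝ (Fin n)) - ∑ i, b i * y i)
    (xhat : EuclideanSpace ℝ (Fin n)) :
    (A.mulVec xhat = b ∧ ∀ x : EuclideanSpace ℝ (Fin n), A.mulVec x = b → f xhat ≤ f x) ↔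
    (∃ yhat : Fin m → ℝ, (∀ y, Ψ yhat ≤ Ψ y) ∧ A.mulVec xhat = b ∧
      xhat = g (WithLp.toLp 2 (A.transpose.mulVec yhat) : EuclideanSpace ℝ (Fin n))) := by
  constructor
  · rintro ⟨hAx, hopt⟩
    have hcont : Continuous f := strong_continuous hα hf
    have hfen_diff : Differentiable ℝ (fenchel f) := fun s => (hg s).hasFDerivAt.differentiableAt
    have hfen_cont : Continuous (fenchel f) := hfen_diff.continuous
    -- the objective φ
    set φ : EuclideanSpace ℝ (Fin n) → ℝ :=
      fun s => fenchel f s - (inner ℝ xhat s : ℝ) with hφ_def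
    have hφcont : Continuous φ :=
      hfen_cont.sub (continuous_const.inner continuous_id)
    -- the subspace S = range Aᵀ
    set S : Submodule ℝ (EuclideanSpace ℝ (Fin n)) := LinearMap.range (pdT A) with hS_def
    have hS_closed : IsClosed (S : Set (EuclideanSpace ℝ (Fin n))) :=
      Submodule.closed_of_finiteDimensional S
    -- bound on f near xhat
    obtain ⟨z1, -, hz1⟩ := (isCompact_closedBall xhat 1).exists_isMaxOn
      ⟨xhat, by simp⟩ hcont.continuousOn
    -- coercivity of φ
    have hcoer : ∀ s : EuclideanSpace ℝ (Fin n), ‖s‖ - f z1 ≤ φ s := by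
      intro s
      rcases eq_or_ne s 0 with rfl | hs
      · have h1 := fenchel_young hα hf (0 : EuclideanSpace ℝ (Fin n)) xhat
        have h2 : f xhat ≤ f z1 := hz1 (by simp)
        simp only [hφ_def, inner_zero_left, inner_zero_right, norm_zero] at h1 ⊢
        linarith
      · have hns : (0:ℝ) < ‖s‖ := norm_pos_iff.mpr hs
        have h1 := fenchel_young hα hf s (xhat + ‖s‖⁻¹ • s)
        have h2 : (inner ℝ s (xhat + ‖s‖⁻¹ • s) : ℝ) = inner ℝ s xhat + ‖s‖ := by
          rw [inner_add_right, real_inner_smul_right, real_inner_self_eq_norm_sq]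
          field_simp
        have hmem : xhat + ‖s‖⁻¹ • s ∈ Metric.closedBall xhat 1 := by
          have : ‖‖s‖⁻¹ • s‖ = 1 := by
            rw [norm_smul, Real.norm_eq_abs, abs_of_pos (inv_pos.mpr hns)]
            exact inv_mul_cancel₀ hns.ne'
          simp [Metric.mem_closedBall, dist_eq_norm, add_sub_cancel_left, this]
        have h3 : f (xhat + ‖s‖⁻¹ • s) ≤ f z1 := hz1 hmem
        have e1 : (inner ℝ xhat s : ℝ) = inner ℝ s xhat := real_inner_comm _ _
        simp only [hφ_def]
        rw [e1]
        linarith [h1, h2.symm.le]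
    -- minimize φ on S
    have hR0 : (0:ℝ) ≤ |φ 0| + |f z1| + 1 := by positivity
    have hKcomp : IsCompact ((S : Set (EuclideanSpace ℝ (Fin n)))
        ∩ Metric.closedBall 0 (|φ 0| + |f z1| + 1)) :=
      (isCompact_closedBall _ _).inter_left hS_closed
    have h0mem : (0 : EuclideanSpace ℝ (Fin n)) ∈ (S : Set (EuclideanSpace ℝ (Fin n)))
        ∩ Metric.closedBall 0 (|φ 0| + |f z1| + 1) :=
      ⟨S.zero_mem, by simpa using hR0⟩
    obtain ⟨sstar, hsmem, hsmin⟩ := hKcomp.exists_isMinOn ⟨0, h0mem⟩ hφcont.continuousOn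
    have hsS : sstar ∈ S := hsmem.1
    have hs_glob : ∀ t ∈ (S : Set (EuclideanSpace ℝ (Fin n))), φ sstar ≤ φ t := by
      intro t ht
      rcases le_or_gt ‖t‖ (|φ 0| + |f z1| + 1) with h | h
      · exact hsmin ⟨ht, by simpa [Metric.mem_closedBall, dist_eq_norm] using h⟩
      · have h0 : φ sstar ≤ φ 0 := hsmin h0mem
        have h1 : ‖t‖ - f z1 ≤ φ t := hcoer t
        have h2 : f z1 ≤ |f z1| := le_abs_self _
        have h3 : φ 0 ≤ |φ 0| := le_abs_self _
        linarith
    -- first order condition along S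
    have hkey : ∀ v ∈ S, (inner ℝ (g sstar) v : ℝ) = inner ℝ xhat v := by
      intro v hv
      have curve : HasDerivAt (fun t : ℝ => sstar + t • v) v 0 := by
        simpa using ((hasDerivAt_id (0:ℝ)).smul_const v).const_add sstar
      have hlin : HasFDerivAt (fun s : EuclideanSpace ℝ (Fin n) => (inner ℝ xhat s : ℝ))
          (toDual ℝ (EuclideanSpace ℝ (Fin n)) xhat) sstar := by
        have h := (toDual ℝ (EuclideanSpace ℝ (Fin n)) xhat).hasFDerivAt (x := sstar)
        exact h.congr_of_eventuallyEq
          (Filter.Eventually.of_forall fun s => (toDual_apply_apply (𝕜 := ℝ)).symm)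
      have hφd : HasFDerivAt φ
          (toDual ℝ (EuclideanSpace ℝ (Fin n)) (g sstar)
            - toDual ℝ (EuclideanSpace ℝ (Fin n)) xhat) sstar :=
        (hg sstar).hasFDerivAt.sub hlin
      have hφd' : HasFDerivAt φ
          (toDual ℝ (EuclideanSpace ℝ (Fin n)) (g sstar)
            - toDual ℝ (EuclideanSpace ℝ (Fin n)) xhat) (sstar + (0:ℝ) • v) := by
        simpa using hφd
      have hψ : HasDerivAt (fun t : ℝ => φ (sstar + t • v))
          ((toDual ℝ (EuclideanSpace ℝ (Fin n)) (g sstar)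
            - toDual ℝ (EuclideanSpace ℝ (Fin n)) xhat) v) 0 :=
        by have h := hφd'.comp_hasDerivAt (0:ℝ) curve; exact h
      have hlmin : IsLocalMin (fun t : ℝ => φ (sstar + t • v)) 0 :=
        Filter.Eventually.of_forall fun t => by
          show φ (sstar + (0:ℝ) • v) ≤ φ (sstar + t • v)
          rw [zero_smul, add_zero]
          exact hs_glob _ (S.add_mem hsS (S.smul_mem t hv))
      have hzero := hlmin.hasDerivAt_eq_zero hψ
      have := hzero
      simp only [ContinuousLinearMap.sub_apply, toDual_apply_apply] at this
      linarith [this]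
    -- feasibility of g sstar
    have hsum : ∀ y : Fin m → ℝ, ∑ i, A.mulVec (g sstar) i * y i = ∑ i, b i * y i := by
      intro y
      have hv : (WithLp.toLp 2 (A.transpose.mulVec y) : EuclideanSpace ℝ (Fin n)) ∈ S := ⟨y, rfl⟩
      have h := hkey _ hv
      have e1 : @inner ℝ (EuclideanSpace ℝ (Fin n)) _ (WithLp.toLp 2 (A.transpose.mulVec y)) (g sstar)
          = @inner ℝ (EuclideanSpace ℝ (Fin n)) _ (g sstar) (WithLp.toLp 2 (A.transpose.mulVec y)) :=
        real_inner_comm _ _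
      have e2 : @inner ℝ (EuclideanSpace ℝ (Fin n)) _ (WithLp.toLp 2 (A.transpose.mulVec y)) xhat
          = @inner ℝ (EuclideanSpace ℝ (Fin n)) _ xhat (WithLp.toLp 2 (A.transpose.mulVec y)) :=
        real_inner_comm _ _
      have l1 := inner_transpose_mulVec A y (g sstar)
      have l2 := inner_transpose_mulVec A y xhat
      rw [e1, h, ← e2, l2, hAx] at l1
      exact l1.symm
    have hfeas : A.mulVec (g sstar) = b := by
      funext i
      have h := hsum (A.mulVec (g sstar) - b)
      have hzero : ∑ i, (A.mulVec (g sstar) i - b i)^2 = 0 := by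
        have expand : ∑ i, (A.mulVec (g sstar) i - b i)^2
            = ∑ i, A.mulVec (g sstar) i * (A.mulVec (g sstar) - b) i
              - ∑ i, b i * (A.mulVec (g sstar) - b) i := by
          rw [← Finset.sum_sub_distrib]
          apply Finset.sum_congr rfl
          intro j _
          simp only [Pi.sub_apply]
          ring
        rw [expand, h, sub_self]
      have hi := (Finset.sum_eq_zero_iff_of_nonneg
        (fun j _ => sq_nonneg (A.mulVec (g sstar) j - b j))).mp hzero i (Finset.mem_univ i)
      have h6 : A.mulVec (g sstar) i - b i = 0 :=
        pow_eq_zero_iff two_ne_zero |>.mp hi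
      linarith [h6]
    -- conclude x̂ = g s*
    have h1 : fenchel f sstar = (inner ℝ sstar (g sstar) : ℝ) - f (g sstar) :=
      fenchel_attain hα hf (hg sstar)
    have h2 : (inner ℝ sstar xhat : ℝ) - f xhat ≤ fenchel f sstar :=
      fenchel_young hα hf sstar xhat
    have h3 : (inner ℝ (g sstar) sstar : ℝ) = inner ℝ xhat sstar := hkey sstar hsS
    have h3' : (inner ℝ sstar (g sstar) : ℝ) = inner ℝ sstar xhat := by
      have e : (inner ℝ sstar (g sstar) : ℝ) = inner ℝ (g sstar) sstar := real_inner_comm _ _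
      have e' : (inner ℝ xhat sstar : ℝ) = inner ℝ sstar xhat := real_inner_comm _ _
      rw [e, h3, e']
    have h4 : f xhat ≤ f (g sstar) := hopt _ hfeas
    have h5 : (inner ℝ sstar xhat : ℝ) - f xhat = fenchel f sstar := by
      linarith [h1, h2, h3', h4]
    have hxg : xhat = g sstar := fenchel_max_unique hα hf (hg sstar) h5
    obtain ⟨ystar, hystar⟩ := hsS
    have hty : (WithLp.toLp 2 (A.transpose.mulVec ystar) : EuclideanSpace ℝ (Fin n)) = sstar := hystar
    have hΨφ : ∀ y' : Fin m → ℝ,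
        Ψ y' = φ (WithLp.toLp 2 (A.transpose.mulVec y') : EuclideanSpace ℝ (Fin n)) := by
      intro y'
      rw [hΨ]
      have hb' : ∑ i, b i * y' i
          = @inner ℝ (EuclideanSpace ℝ (Fin n)) _ xhat (WithLp.toLp 2 (A.transpose.mulVec y')) := by
        rw [real_inner_comm, inner_transpose_mulVec, hAx]
      rw [hb']
    refine ⟨ystar, ?_, hAx, ?_⟩
    · intro y
      rw [hΨφ y, hΨφ ystar, hty]
      exact hs_glob _ ⟨y, rfl⟩
    · rw [hty]
      exact hxg
  · rintro ⟨yhat, hymin, hAx, hxg⟩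
    refine ⟨hAx, fun x hx => ?_⟩
    have hFY := fenchel_young hα hf
      (WithLp.toLp 2 (A.transpose.mulVec yhat) : EuclideanSpace ℝ (Fin n)) x
    have hatt := fenchel_attain hα hf
      (hg (WithLp.toLp 2 (A.transpose.mulVec yhat) : EuclideanSpace ℝ (Fin n)))
    rw [← hxg] at hatt
    have l1 := inner_transpose_mulVec A yhat x
    have l2 := inner_transpose_mulVec A yhat xhat
    rw [hx] at l1
    rw [hAx] at l2
    have hinner : @inner ℝ (EuclideanSpace ℝ (Fin n)) _ (WithLp.toLp 2 (A.transpose.mulVec yhat)) x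
        = @inner ℝ (EuclideanSpace ℝ (Fin n)) _ (WithLp.toLp 2 (A.transpose.mulVec yhat)) xhat := by
      rw [l1, l2]
    linarith [hFY, hatt, hinner]
end
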